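/- There exists a subset K of the positive integers and a family (ω_x)_{x∈ℝ} of nonprincipal ultrafilters on the positive integers such that the subsets A_x = log(Cone_{ω_x}(K) ∖ {0}) of ℝ are pairwise at infinite Hausdorff distance: for all x ≠ y and every c ≥ 0, it is not the case that both A_x ⊆ A_y + [−c,c] and A_y ⊆ A_x + [−c,c]. In particular, the sets log(Cone_ω(K) ∖ {0}), as ω ranges over nonprincipal ultrafilters, achieve 2^ℵ₀ many subsets of ℝ at pairwise infinite Hausdorff distance. -/

import Mathlib

open Filter

noncomputable section

/-- The asymptotic cone of a set `J` of positive integers along the ultrafilter `ω`,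
identified with a subset of `ℝ`. -/
def coneSet (ω : Ultrafilter ℕ) (J : Set ℕ) : Set ℝ :=
  {r | ∃ u : ℕ → ℕ, (∀ n, u n ∈ J) ∧ (∃ C : ℝ, ∀ n : ℕ, 1 ≤ n → (u n : ℝ) ≤ C * n) ∧
    Tendsto (fun n => (u n : ℝ) / n) ω (nhds r)}

/-- `A ⊆ B + [-c, c]`. -/
def WithinHausdorff (c : ℝ) (A B : Set ℝ) : Prop :=
  ∀ a ∈ A, ∃ b ∈ B, |a - b| ≤ c

namespace St15

open Classical

/-- Blocks: a block is a pair (scale index, finite set of "digit" indices). -/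
abbrev Blk : Type := ℕ × Finset ℕ

/-- width bound of a block -/
def wB (b : Blk) : ℕ := (b.2.sup id) * (b.2.sup id)

def idx (b : Blk) : ℕ := Encodable.encode b

lemma idx_injective : Function.Injective idx := Encodable.encode_injective

/-- width bound of the block encoded by `k` (0 if undecodable) -/
def vW (k : ℕ) : ℕ := ((Encodable.decode (α := Blk) k).map wB).getD 0

lemma vW_idx (b : Blk) : vW (idx b) = wB b := by
  simp [vW, idx, Encodable.encodek]

/-- running sum of width bounds -/
def SS (k : ℕ) : ℕ := ∑ l ∈ Finset.range (k + 1), vW l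

lemma vW_le_SS {m' m : ℕ} (h : m' ≤ m) : vW m' ≤ SS m :=
  Finset.single_le_sum (fun _ _ => Nat.zero_le _) (Finset.mem_range.2 (Nat.lt_succ_of_le h))

/-- base exponent of the m-th block -/
def W (m : ℕ) : ℕ := ∑ k ∈ Finset.range (m + 1), (k + 1 + SS k)

lemma W_gap {m m' : ℕ} (h : m < m') : W m + (m' + 1 + SS m') ≤ W m' := by
  have hsub : insert m' (Finset.range (m + 1)) ⊆ Finset.range (m' + 1) := by
    intro t ht
    rcases Finset.mem_insert.1 ht with rfl | ht
    · exact Finset.mem_range.2 (Nat.lt_succ_self _)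
    · exact Finset.mem_range.2 (lt_of_lt_of_le (Finset.mem_range.1 ht) (by omega))
  have hnm : m' ∉ Finset.range (m + 1) := by simp; omega
  calc W m + (m' + 1 + SS m')
      = ∑ k ∈ insert m' (Finset.range (m + 1)), (k + 1 + SS k) := by
        rw [Finset.sum_insert hnm, ← W]; ring
    _ ≤ W m' := Finset.sum_le_sum_of_subset hsub

lemma W_strictMono : StrictMono W := by
  apply strictMono_nat_of_lt_succ
  intro n
  have h := W_gap (Nat.lt_succ_self n)
  simp only [Nat.succ_eq_add_one] at *
  omega

/-- base exponent of a block -/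
def MB (b : Blk) : ℕ := W (idx b)

/-- the set K of positive integers -/
def K : Set ℕ := {x | ∃ b : Blk, ∃ i ∈ b.2, x = 2 ^ (MB b + i * i)}

lemma e_le_vW {b : Blk} {i : ℕ} (hi : i ∈ b.2) : i * i ≤ vW (idx b) := by
  rw [vW_idx]
  exact Nat.mul_le_mul (Finset.le_sup (f := id) hi) (Finset.le_sup (f := id) hi)

/-- The key separation lemma: blocks are so far apart that an exponent identity
forces the blocks to coincide. -/
lemma spacing {b b' : Blk} {i' : ℕ} (hi' : i' ∈ b'.2) {z : ℤ}
    (hz : (z.natAbs : ℕ) ≤ idx b)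
    (h : (MB b' : ℤ) + (i' * i' : ℕ) - (MB b : ℤ) = z) : b' = b := by
  by_contra hne
  have hidx : idx b' ≠ idx b := fun he => hne (idx_injective he)
  have he : i' * i' ≤ vW (idx b') := e_le_vW hi'
  rcases lt_or_gt_of_ne hidx with hlt | hgt
  · -- idx b' < idx b
    have h1 : W (idx b') + (idx b + 1 + SS (idx b)) ≤ W (idx b) := W_gap hlt
    have h2 : vW (idx b') ≤ SS (idx b) := vW_le_SS hlt.le
    have hb : MB b = W (idx b) := rfl
    have hb' : MB b' = W (idx b') := rfl
    rw [hb, hb'] at h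
    omega
  · -- idx b < idx b'
    have h1 : W (idx b) + (idx b' + 1 + SS (idx b')) ≤ W (idx b') := W_gap hgt
    have hb : MB b = W (idx b) := rfl
    have hb' : MB b' = W (idx b') := rfl
    rw [hb, hb'] at h
    omega

/-- An injection from ℝ to sets of naturals. -/
def gR (x : ℝ) : Set ℕ := {n | ∃ q : ℚ, Encodable.encode q = n ∧ (q : ℝ) < x}

lemma gR_lt {x y : ℝ} (h : x < y) : ∃ n, n ∈ gR y ∧ n ∉ gR x := by
  obtain ⟨q, hq1, hq2⟩ := exists_rat_btwn h
  refine ⟨Encodable.encode q, ⟨q, rfl, hq2⟩, ?_⟩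
  rintro ⟨q', hq', hlt⟩
  rw [Encodable.encode_injective hq'] at hlt
  exact absurd hq1 (not_lt.2 hlt.le)

lemma gR_ne {x y : ℝ} (h : x ≠ y) : ∃ k, ¬ (k ∈ gR x ↔ k ∈ gR y) := by
  rcases lt_or_gt_of_ne h with hlt | hlt
  · obtain ⟨n, hn1, hn2⟩ := gR_lt hlt
    exact ⟨n, fun hiff => hn2 (hiff.2 hn1)⟩
  · obtain ⟨n, hn1, hn2⟩ := gR_lt hlt
    exact ⟨n, fun hiff => hn2 (hiff.1 hn1)⟩

/-- prefix finsets -/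
def pfx (x : ℝ) (n : ℕ) : Finset ℕ := (Finset.range n).filter (fun k => k ∈ gR x)

/-- the digit sets: encodings of the prefixes; distinct reals give digit sets with
infinite difference -/
def D (x : ℝ) : Set ℕ := Set.range (fun n => Encodable.encode ((n, pfx x n) : ℕ × Finset ℕ))

lemma D_diff_infinite {x y : ℝ} (h : x ≠ y) : (D x \ D y).Infinite := by
  obtain ⟨k, hk⟩ := gR_ne h
  refine Set.infinite_of_injective_forall_mem
    (f := fun n : ℕ => Encodable.encode ((n + k + 1, pfx x (n + k + 1)) : ℕ × Finset ℕ)) ?_ ?_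
  · intro a b hab
    have := Encodable.encode_injective hab
    simpa using congrArg Prod.fst this
  · intro n
    constructor
    · exact ⟨n + k + 1, rfl⟩
    · rintro ⟨m, hm⟩
      have hpair := Encodable.encode_injective hm
      have h1 : m = n + k + 1 := congrArg Prod.fst hpair
      have h2 : pfx y m = pfx x (n + k + 1) := congrArg Prod.snd hpair
      subst h1
      apply hk
      have hkx : k ∈ pfx x (n + k + 1) ↔ k ∈ gR x := by
        simp [pfx]
      have hky : k ∈ pfx y (n + k + 1) ↔ k ∈ gR y := by
        simp [pfx]
      rw [← hkx, ← hky, h2]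

/-- the finite approximations of `D x` -/
def Fx (x : ℝ) (j : ℕ) : Finset ℕ := (Finset.range (j + 1)).filter (fun k => k ∈ D x)

lemma mem_Fx {x : ℝ} {i j : ℕ} (hi : i ∈ D x) (hij : i ≤ j) : i ∈ Fx x j := by
  simp [Fx, Finset.mem_filter, Finset.mem_range]
  exact ⟨by omega, hi⟩

lemma Fx_subset_D {x : ℝ} {i j : ℕ} (hi : i ∈ Fx x j) : i ∈ D x := by
  simp [Fx, Finset.mem_filter] at hi
  exact hi.2

/-- scale sequence for the real x -/
def σx (x : ℝ) (j : ℕ) : ℕ := 2 ^ (MB ((j, Fx x j) : Blk))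

lemma σx_pos (x : ℝ) (j : ℕ) : 0 < σx x j := Nat.pow_pos (by norm_num)

lemma σx_injective (x : ℝ) : Function.Injective (σx x) := by
  intro a b hab
  have h1 : MB ((a, Fx x a) : Blk) = MB ((b, Fx x b) : Blk) :=
    Nat.pow_right_injective (le_refl 2) hab
  have h2 : idx ((a, Fx x a) : Blk) = idx ((b, Fx x b) : Blk) :=
    W_strictMono.injective h1
  have := idx_injective h2
  exact congrArg Prod.fst this

/-- the ultrafilters -/
def ωx (x : ℝ) : Ultrafilter ℕ := Ultrafilter.map (σx x) (Filter.hyperfilter ℕ)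

lemma ωx_le_cofinite (x : ℝ) : (ωx x : Filter ℕ) ≤ Filter.cofinite := by
  rw [ωx, Ultrafilter.coe_map]
  calc Filter.map (σx x) (Filter.hyperfilter ℕ : Filter ℕ)
      ≤ Filter.map (σx x) Filter.cofinite :=
        Filter.map_mono (Filter.hyperfilter_le_cofinite)
    _ ≤ Filter.cofinite := (σx_injective x).tendsto_cofinite

lemma cofinite_mem_hyper {s : Set ℕ} (hs : sᶜ.Finite) : s ∈ Filter.hyperfilter ℕ :=
  Filter.hyperfilter_le_cofinite hs

/-- Membership direction: for `i ∈ D x`, `2^(i*i)` is in the cone. -/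
lemma lemA {x : ℝ} {i : ℕ} (hi : i ∈ D x) : ((2 : ℝ) ^ (i * i)) ∈ coneSet (ωx x) K := by
  classical
  set k₀ : ℕ := 2 ^ (MB ((0, {0}) : Blk) + 0 * 0) with hk₀def
  have hk₀K : k₀ ∈ K := ⟨((0, {0}) : Blk), 0, by simp, rfl⟩
  set u : ℕ → ℕ := fun n => if h : ∃ j, i ≤ j ∧ σx x j = n then n * 2 ^ (i * i) else k₀ with hudef
  have hev : ∀ᶠ n in (ωx x : Filter ℕ), (2 : ℝ) ^ (i * i) = (u n : ℝ) / n := by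
    have hmem : {j : ℕ | i ≤ j} ∈ Filter.hyperfilter ℕ := by
      apply cofinite_mem_hyper
      have hs : {j : ℕ | i ≤ j}ᶜ ⊆ Set.Iio i := by
        intro t ht; simp at ht ⊢; omega
      exact Set.Finite.subset (Set.finite_Iio i) hs
    have himg : σx x '' {j : ℕ | i ≤ j} ∈ (ωx x : Filter ℕ) := by
      rw [ωx, Ultrafilter.coe_map]
      exact Filter.image_mem_map hmem
    filter_upwards [himg]
    rintro n ⟨j, hj, rfl⟩
    have hcond : ∃ j', i ≤ j' ∧ σx x j' = σx x j := ⟨j, hj, rfl⟩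
    have hun : u (σx x j) = σx x j * 2 ^ (i * i) := by
      rw [hudef]; simp only [dif_pos hcond]
    rw [hun]
    have hpos : (0 : ℝ) < (σx x j : ℝ) := by exact_mod_cast σx_pos x j
    push_cast
    field_simp
  refine ⟨u, ?_, ?_, ?_⟩
  · intro n
    by_cases h : ∃ j, i ≤ j ∧ σx x j = n
    · have hun : u n = n * 2 ^ (i * i) := by rw [hudef]; simp only [dif_pos h]
      rw [hun]
      obtain ⟨j, hij, hσ⟩ := h
      refine ⟨((j, Fx x j) : Blk), i, mem_Fx hi hij, ?_⟩
      rw [← hσ]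
      simp only [σx]
      rw [← pow_add]
    · have hun : u n = k₀ := by rw [hudef]; simp only [dif_neg h]
      rw [hun]; exact hk₀K
  · refine ⟨(k₀ : ℝ) + 2 ^ (i * i), fun n hn => ?_⟩
    have hn1 : (1 : ℝ) ≤ (n : ℝ) := by exact_mod_cast hn
    have hk0 : (0 : ℝ) ≤ (k₀ : ℝ) := Nat.cast_nonneg _
    by_cases h : ∃ j, i ≤ j ∧ σx x j = n
    · have hun : u n = n * 2 ^ (i * i) := by rw [hudef]; simp only [dif_pos h]
      rw [hun]
      push_cast
      nlinarith [pow_pos (by norm_num : (0:ℝ) < 2) (i * i)]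
    · have hun : u n = k₀ := by rw [hudef]; simp only [dif_neg h]
      rw [hun]
      nlinarith [pow_pos (by norm_num : (0:ℝ) < 2) (i * i)]
  · exact tendsto_const_nhds.congr' hev

lemma zpow_eq_of_Ioo {r : ℝ} (hr : 0 < r) {d e : ℤ}
    (hd : (2 : ℝ) ^ d ∈ Set.Ioo (3 / 4 * r) (3 / 2 * r))
    (he : (2 : ℝ) ^ e ∈ Set.Ioo (3 / 4 * r) (3 / 2 * r)) : d = e := by
  have h2 : (0 : ℝ) < 2 := by norm_num
  have hde : (2 : ℝ) ^ d < 2 * 2 ^ e := by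
    calc (2 : ℝ) ^ d < 3 / 2 * r := hd.2
      _ = 2 * (3 / 4 * r) := by ring
      _ < 2 * 2 ^ e := by nlinarith [he.1]
  have hed : (2 : ℝ) ^ e < 2 * 2 ^ d := by
    calc (2 : ℝ) ^ e < 3 / 2 * r := he.2
      _ = 2 * (3 / 4 * r) := by ring
      _ < 2 * 2 ^ d := by nlinarith [hd.1]
  have h1 : (2 : ℝ) ^ d < 2 ^ (e + 1) := by
    rw [zpow_add₀ (by norm_num : (2:ℝ) ≠ 0), zpow_one]
    linarith
  have h2' : (2 : ℝ) ^ e < 2 ^ (d + 1) := by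
    rw [zpow_add₀ (by norm_num : (2:ℝ) ≠ 0), zpow_one]
    linarith
  have hlt1 : d < e + 1 := (zpow_lt_zpow_iff_right₀ (by norm_num : (1:ℝ) < 2)).1 h1
  have hlt2 : e < d + 1 := (zpow_lt_zpow_iff_right₀ (by norm_num : (1:ℝ) < 2)).1 h2'
  omega

/-- Converse direction: every nonzero element of the cone is `2^(i*i)` for some `i ∈ D x`. -/
lemma lemB {x : ℝ} {r : ℝ} (hr : r ∈ coneSet (ωx x) K) (h0 : r ≠ 0) :
    ∃ i ∈ D x, r = (2 : ℝ) ^ (i * i) := by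
  obtain ⟨u, huK, ⟨C, hC⟩, hT⟩ := hr
  have hrpos : 0 < r := by
    have h1 : (0 : ℝ) ≤ r := by
      apply ge_of_tendsto' hT
      intro n
      positivity
    exact lt_of_le_of_ne h1 (Ne.symm h0)
  have hT' : Tendsto (fun j => (u (σx x j) : ℝ) / (σx x j)) (Filter.hyperfilter ℕ) (nhds r) := by
    have := hT
    rw [ωx, Ultrafilter.coe_map] at this
    exact this.comp Filter.tendsto_map
  choose b' i' hi' hu using fun j => huK (σx x j)
  set d : ℕ → ℤ := fun j =>
    ((MB (b' j) + i' j * i' j : ℕ) : ℤ) - ((MB ((j, Fx x j) : Blk) : ℕ) : ℤ) with hd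
  have hq : ∀ j, (u (σx x j) : ℝ) / (σx x j) = (2 : ℝ) ^ (d j) := by
    intro j
    rw [hu j]
    simp only [σx, hd]
    push_cast
    rw [← zpow_natCast (2 : ℝ) (MB (b' j) + i' j * i' j),
        ← zpow_natCast (2 : ℝ) (MB ((j, Fx x j) : Blk)),
        ← zpow_sub₀ (by norm_num : (2:ℝ) ≠ 0)]
    congr 1 <;> (push_cast; ring)
  have hT2 : Tendsto (fun j => (2 : ℝ) ^ (d j)) (Filter.hyperfilter ℕ) (nhds r) :=
    hT'.congr hq
  have hIoo : Set.Ioo (3 / 4 * r) (3 / 2 * r) ∈ nhds r :=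
    Ioo_mem_nhds (by linarith) (by linarith)
  have hTmem : ∀ᶠ j in (Filter.hyperfilter ℕ : Filter ℕ),
      (2 : ℝ) ^ (d j) ∈ Set.Ioo (3 / 4 * r) (3 / 2 * r) := hT2.eventually hIoo
  obtain ⟨j₀, hj₀⟩ := hTmem.exists
  set z : ℤ := d j₀ with hz
  have hdz : ∀ᶠ j in (Filter.hyperfilter ℕ : Filter ℕ), d j = z := by
    filter_upwards [hTmem] with j hj
    exact zpow_eq_of_Ioo hrpos hj hj₀
  have hrz : r = (2 : ℝ) ^ z := by
    have hconst : Tendsto (fun _ : ℕ => (2 : ℝ) ^ z) (Filter.hyperfilter ℕ) (nhds ((2:ℝ) ^ z)) :=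
      tendsto_const_nhds
    have : Tendsto (fun j => (2 : ℝ) ^ (d j)) (Filter.hyperfilter ℕ) (nhds ((2:ℝ) ^ z)) := by
      apply hconst.congr'
      filter_upwards [hdz] with j hj
      rw [hj]
    exact tendsto_nhds_unique hT2 this
  -- find an index with large block index
  have hcof : {j : ℕ | z.natAbs ≤ idx ((j, Fx x j) : Blk)} ∈ Filter.hyperfilter ℕ := by
    apply cofinite_mem_hyper
    have hinj : Function.Injective (fun j : ℕ => idx ((j, Fx x j) : Blk)) := by
      intro a b hab
      have := idx_injective hab
      exact congrArg Prod.fst this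
    have hsub : {j : ℕ | z.natAbs ≤ idx ((j, Fx x j) : Blk)}ᶜ ⊆
        (fun j : ℕ => idx ((j, Fx x j) : Blk)) ⁻¹' (Set.Iio z.natAbs) := by
      intro t ht
      simp at ht ⊢
      omega
    exact Set.Finite.subset ((Set.finite_Iio _).preimage hinj.injOn) hsub
  obtain ⟨j, hjz, hjI⟩ := (hdz.and (Filter.eventually_of_mem hcof (fun _ h => h))).exists
  have hspace := spacing (hi' j) hjI (by rw [← hjz]; simp only [hd]; push_cast; ring)
  have hMB : MB (b' j) = MB ((j, Fx x j) : Blk) := by rw [hspace]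
  have hzval : z = ((i' j * i' j : ℕ) : ℤ) := by
    rw [← hjz]
    simp only [hd, hMB]
    push_cast
    ring
  refine ⟨i' j, ?_, ?_⟩
  · have := hi' j
    rw [hspace] at this
    exact Fx_subset_D this
  · rw [hrz, hzval, zpow_natCast]

/-- abbreviation for the log-cone sets -/
def A (x : ℝ) : Set ℝ := Real.log '' (coneSet (ωx x) K \ {0})

lemma mem_A {x : ℝ} {i : ℕ} (hi : i ∈ D x) : ((i * i : ℕ) : ℝ) * Real.log 2 ∈ A x := by
  refine ⟨(2 : ℝ) ^ (i * i), ⟨lemA hi, ?_⟩, ?_⟩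
  · simp only [Set.mem_singleton_iff]
    positivity
  · rw [Real.log_pow]

lemma A_sub {x : ℝ} {t : ℝ} (ht : t ∈ A x) : ∃ i ∈ D x, t = ((i * i : ℕ) : ℝ) * Real.log 2 := by
  obtain ⟨s, ⟨hsc, hs0⟩, rfl⟩ := ht
  have hs0' : s ≠ 0 := by simpa using hs0
  obtain ⟨i, hiD, rfl⟩ := lemB hsc hs0'
  exact ⟨i, hiD, by rw [Real.log_pow]⟩

lemma haus {x y : ℝ} (hxy : x ≠ y) {c : ℝ} (hc : 0 ≤ c) : ¬ WithinHausdorff c (A x) (A y) := by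
  intro hW
  have hlog2 : 0 < Real.log 2 := Real.log_pos (by norm_num)
  -- choose a large natural N with c < N * log 2
  obtain ⟨N, hN⟩ := exists_nat_gt (c / Real.log 2)
  have hNc : c < (N : ℝ) * Real.log 2 := by
    rw [div_lt_iff₀ hlog2] at hN
    linarith
  -- choose i ∈ D x \ D y with N < i
  have hinf := D_diff_infinite hxy
  obtain ⟨i, hiDiff, hNi⟩ : ∃ i ∈ D x \ D y, N < i := by
    by_contra hcon
    push_neg at hcon
    exact hinf (Set.Finite.subset (Set.finite_Iic N)
      (fun t ht => Set.mem_Iic.2 (hcon t ht)))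
  obtain ⟨hiDx, hiDy⟩ := hiDiff
  obtain ⟨b, hb, hab⟩ := hW _ (mem_A hiDx)
  obtain ⟨m, hmDy, rfl⟩ := A_sub hb
  have hmi : m ≠ i := fun h => hiDy (h ▸ hmDy)
  -- |i² - m²| ≥ i as reals
  have h1 : (1 : ℝ) ≤ |(i : ℝ) - (m : ℝ)| := by
    have him : (i : ℤ) ≠ (m : ℤ) := by exact_mod_cast hmi.symm
    have : (1 : ℤ) ≤ |(i : ℤ) - (m : ℤ)| := Int.one_le_abs (sub_ne_zero.2 him)
    calc (1 : ℝ) ≤ (|(i : ℤ) - (m : ℤ)| : ℤ) := by exact_mod_cast this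
      _ = |(i : ℝ) - (m : ℝ)| := by push_cast; ring
  have h2 : (i : ℝ) ≤ |((i * i : ℕ) : ℝ) - ((m * m : ℕ) : ℝ)| := by
    have hfac : ((i * i : ℕ) : ℝ) - ((m * m : ℕ) : ℝ) = ((i : ℝ) - m) * ((i : ℝ) + m) := by
      push_cast; ring
    rw [hfac, abs_mul]
    have him : (0 : ℝ) ≤ (i : ℝ) + m := by positivity
    have : |(i : ℝ) + m| = (i : ℝ) + m := abs_of_nonneg him
    rw [this]
    nlinarith [Nat.cast_nonneg (α := ℝ) m]
  have hdist : (i : ℝ) * Real.log 2 ≤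
      |((i * i : ℕ) : ℝ) * Real.log 2 - ((m * m : ℕ) : ℝ) * Real.log 2| := by
    rw [← sub_mul, abs_mul, abs_of_pos hlog2]
    exact mul_le_mul_of_nonneg_right h2 hlog2.le
  have hNi' : (N : ℝ) < (i : ℝ) := by exact_mod_cast hNi
  nlinarith
end St15

/-- Theorem: there exist a set `K` of positive integers and a family `(ω_x)_{x ∈ ℝ}` of
nonprincipal ultrafilters such that the sets `A_x = log(Cone_{ω_x}(K) ∖ {0}) ⊆ ℝ` are
pairwise at infinite Hausdorff distance; in particular, as `ω` ranges over nonprincipal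
ultrafilters, the sets `log(Cone_ω(K) ∖ {0})` achieve `2^ℵ₀` many distinct subsets of `ℝ`
at pairwise infinite Hausdorff distance. -/
theorem statement15 :
    ∃ (K : Set ℕ), (∀ x ∈ K, 0 < x) ∧
      ∃ ω : ℝ → Ultrafilter ℕ, (∀ x, ((ω x : Filter ℕ)) ≤ Filter.cofinite) ∧
        (∀ x y : ℝ, x ≠ y → ∀ c : ℝ, 0 ≤ c →
          ¬ (WithinHausdorff c (Real.log '' (coneSet (ω x) K \ {0}))
                (Real.log '' (coneSet (ω y) K \ {0})) ∧
             WithinHausdorff c (Real.log '' (coneSet (ω y) K \ {0}))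
                (Real.log '' (coneSet (ω x) K \ {0})))) ∧
        Function.Injective (fun x : ℝ => Real.log '' (coneSet (ω x) K \ {0})) := by
  refine ⟨St15.K, ?_, St15.ωx, St15.ωx_le_cofinite, ?_, ?_⟩
  · rintro n ⟨b, i, hi, rfl⟩
    positivity
  · intro x y hxy c hc h
    exact St15.haus hxy hc h.1
  · intro x y h
    by_contra hxy
    apply St15.haus hxy (le_refl (0 : ℝ))
    have h' : Real.log '' (coneSet (St15.ωx x) St15.K \ {0}) =
        Real.log '' (coneSet (St15.ωx y) St15.K \ {0}) := h
    show WithinHausdorff 0 (St15.A x) (St15.A y)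
    rw [St15.A, St15.A, h']
    intro a ha
    exact ⟨a, ha, by simp⟩

end
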